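/- For every real ε > 0 there exists a natural number N such that for every n ≥ N, every finite set U of size n, and all natural numbers p, q, r ≥ 1 with n ≥ p ≥ r and n − p + r ≥ q ≥ r, there exists a family 𝒞 of q-element subsets of U with |𝒞| ≤ κ(n,p,q,r) · 2^(εn) such that for every p-element subset T of U there is some X ∈ 𝒞 with |T ∩ X| ≥ r. -/

import Mathlib

/-- `κ(n,p,q,r) = C(n,q) / (C(p,r)·C(n−p, q−r))`. -/
noncomputable def kappa (n p q r : ℕ) : ℝ :=
  (n.choose q : ℝ) / ((p.choose r : ℝ) * ((n - p).choose (q - r) : ℝ))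

open Finset

lemma good_count {V : Type*} [DecidableEq V] (U T : Finset V) (p q r : ℕ)
    (hTU : T ⊆ U) (hT : T.card = p) (hrq : r ≤ q) (hrp : r ≤ p) :
    p.choose r * ((U.card - p).choose (q - r)) ≤
      ((U.powersetCard q).filter (fun X => r ≤ (T ∩ X).card)).card := by
  classical
  have hcard : ((T.powersetCard r) ×ˢ ((U \ T).powersetCard (q - r))).card
      = p.choose r * ((U.card - p).choose (q - r)) := by
    rw [card_product, card_powersetCard, card_powersetCard, hT, card_sdiff_of_subset hTU, hT]
  rw [← hcard]
  apply Finset.card_le_card_of_injOn (fun AB => AB.1 ∪ AB.2)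
  · rintro ⟨A, B⟩ hAB
    simp only [mem_coe, mem_product, mem_powersetCard] at hAB
    obtain ⟨⟨hAT, hA⟩, hBT, hB⟩ := hAB
    have hdisj : Disjoint A B := by
      refine Finset.disjoint_left.2 fun x hxA hxB => ?_
      exact (mem_sdiff.1 (hBT hxB)).2 (hAT hxA)
    simp only [mem_coe, mem_filter, mem_powersetCard]
    refine ⟨⟨?_, ?_⟩, ?_⟩
    · exact union_subset (hAT.trans hTU) (hBT.trans sdiff_subset)
    · rw [card_union_of_disjoint hdisj, hA, hB]; omega
    · have : A ⊆ T ∩ (A ∪ B) := fun x hx => mem_inter.2 ⟨hAT hx, mem_union_left _ hx⟩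
      calc r = A.card := hA.symm
        _ ≤ _ := card_le_card this
  · rintro ⟨A₁, B₁⟩ h₁ ⟨A₂, B₂⟩ h₂ heq
    simp only [mem_coe, mem_product, mem_powersetCard] at h₁ h₂
    obtain ⟨⟨hA₁T, _⟩, hB₁T, _⟩ := h₁
    obtain ⟨⟨hA₂T, _⟩, hB₂T, _⟩ := h₂
    simp only at heq
    have key : ∀ (A B : Finset V), A ⊆ T → B ⊆ U \ T → (A ∪ B) ∩ T = A := by
      intro A B hA hB
      ext x
      simp only [mem_inter, mem_union]
      constructor
      · rintro ⟨hx | hx, hxT⟩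
        · exact hx
        · exact absurd hxT (mem_sdiff.1 (hB hx)).2
      · intro hx; exact ⟨Or.inl hx, hA hx⟩
    have key2 : ∀ (A B : Finset V), A ⊆ T → B ⊆ U \ T → (A ∪ B) \ T = B := by
      intro A B hA hB
      ext x
      simp only [mem_sdiff, mem_union]
      constructor
      · rintro ⟨hx | hx, hxT⟩
        · exact absurd (hA hx) hxT
        · exact hx
      · intro hx
        exact ⟨Or.inr hx, (mem_sdiff.1 (hB hx)).2⟩
    have e1 : A₁ = A₂ := by
      rw [← key A₁ B₁ hA₁T hB₁T, ← key A₂ B₂ hA₂T hB₂T, heq]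
    have e2 : B₁ = B₂ := by
      rw [← key2 A₁ B₁ hA₁T hB₁T, ← key2 A₂ B₂ hA₂T hB₂T, heq]
    simp [e1, e2]


lemma cover_exists {V : Type*} [DecidableEq V] (U : Finset V) (p q r m D : ℕ)
    (hD : ∀ T ∈ U.powersetCard p,
      D ≤ ((U.powersetCard q).filter (fun X => r ≤ (T ∩ X).card)).card)
    (hm : (U.powersetCard p).card * ((U.powersetCard q).card - D) ^ m
        < (U.powersetCard q).card ^ m) :
    ∃ 𝒞 : Finset (Finset V), 𝒞.card ≤ m ∧ (∀ X ∈ 𝒞, X ⊆ U ∧ X.card = q) ∧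
      ∀ T ∈ U.powersetCard p, ∃ X ∈ 𝒞, r ≤ (T ∩ X).card := by
  classical
  set Qq := U.powersetCard q with hQq
  set Pp := U.powersetCard p with hPp
  set F := Fintype.piFinset (fun _ : Fin m => Qq) with hF
  have hFcard : F.card = Qq.card ^ m := by
    rw [hF, Fintype.card_piFinset]
    simp
  clear_value F Qq Pp
  have key : ∃ f ∈ F, ∀ T ∈ Pp, ∃ i, r ≤ (T ∩ f i).card := by
    by_contra hcon
    push_neg at hcon
    -- every tuple leaves some T uncovered
    have h1 : ∀ f ∈ F, 1 ≤ (Pp.filter (fun T => ∀ i, (T ∩ f i).card < r)).card := by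
      intro f hf
      obtain ⟨T, hT, hTbad⟩ := hcon f hf
      refine card_pos.2 ⟨T, mem_filter.2 ⟨hT, fun i => ?_⟩⟩
      exact hTbad i
    have h2 : F.card ≤ ∑ f ∈ F, (Pp.filter (fun T => ∀ i, (T ∩ f i).card < r)).card := by
      calc F.card = ∑ _f ∈ F, 1 := by simp
        _ ≤ _ := Finset.sum_le_sum h1
    have h3 : ∑ f ∈ F, (Pp.filter (fun T => ∀ i, (T ∩ f i).card < r)).card
        = ∑ T ∈ Pp, (F.filter (fun f => ∀ i, (T ∩ f i).card < r)).card := by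
      simp only [Finset.card_filter]
      exact Finset.sum_comm
    have h4 : ∀ T ∈ Pp, (F.filter (fun f => ∀ i, (T ∩ f i).card < r)).card
        = (Qq.filter (fun X => (T ∩ X).card < r)).card ^ m := by
      intro T _
      have : F.filter (fun f => ∀ i, (T ∩ f i).card < r)
          = Fintype.piFinset (fun _ : Fin m => Qq.filter (fun X => (T ∩ X).card < r)) := by
        ext f
        simp only [mem_filter, hF, Fintype.mem_piFinset, mem_filter]
        constructor
        · rintro ⟨h1, h2⟩ a; exact ⟨h1 a, h2 a⟩
        · intro h; exact ⟨fun a => (h a).1, fun a => (h a).2⟩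
      rw [this, Fintype.card_piFinset]
      simp
    have h5 : ∀ T ∈ Pp, (Qq.filter (fun X => (T ∩ X).card < r)).card ≤ Qq.card - D := by
      intro T hT
      have hsplit := Finset.card_filter_add_card_filter_not
        (s := Qq) (p := fun X => r ≤ (T ∩ X).card)
      have hgood := hD T hT
      simp only [not_le] at hsplit
      have hb : (Qq.filter (fun X => (T ∩ X).card < r)).card
          = Qq.card - (Qq.filter (fun X => r ≤ (T ∩ X).card)).card :=
        Nat.eq_sub_of_add_eq' hsplit
      rw [hb]
      exact Nat.sub_le_sub_left hgood _
    have h6 : ∑ T ∈ Pp, (F.filter (fun f => ∀ i, (T ∩ f i).card < r)).card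
        ≤ Pp.card * (Qq.card - D) ^ m := by
      calc ∑ T ∈ Pp, (F.filter (fun f => ∀ i, (T ∩ f i).card < r)).card
          ≤ ∑ _T ∈ Pp, (Qq.card - D) ^ m := by
            refine Finset.sum_le_sum fun T hT => ?_
            rw [h4 T hT]
            exact Nat.pow_le_pow_left (h5 T hT) m
        _ = Pp.card * (Qq.card - D) ^ m := by rw [Finset.sum_const, smul_eq_mul]
    have : Qq.card ^ m < Qq.card ^ m := by
      calc Qq.card ^ m = F.card := hFcard.symm
        _ ≤ _ := h2
        _ = _ := h3
        _ ≤ Pp.card * (Qq.card - D) ^ m := h6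
        _ < Qq.card ^ m := hm
    exact lt_irrefl _ this
  obtain ⟨f, hfF, hf⟩ := key
  refine ⟨Finset.image f Finset.univ, ?_, ?_, ?_⟩
  · calc (Finset.image f Finset.univ).card ≤ (Finset.univ : Finset (Fin m)).card :=
        card_image_le
      _ = m := by simp
  · intro X hX
    obtain ⟨i, _, rfl⟩ := Finset.mem_image.1 hX
    rw [hF] at hfF
    have := (Fintype.mem_piFinset.1 hfF) i
    rw [hQq] at this
    exact (mem_powersetCard.1 this)
  · intro T hT
    obtain ⟨i, hi⟩ := hf T hT
    exact ⟨f i, Finset.mem_image.2 ⟨i, Finset.mem_univ i, rfl⟩, hi⟩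


lemma choose_le_two_pow' (n p : ℕ) : n.choose p ≤ 2 ^ n := by
  rcases le_or_gt p n with h | h
  · calc n.choose p ≤ ∑ i ∈ Finset.range (n + 1), n.choose i :=
        Finset.single_le_sum (fun i _ => Nat.zero_le _)
          (Finset.mem_range.2 (Nat.lt_succ_of_le h))
      _ = 2 ^ n := Nat.sum_range_choose n
  · rw [Nat.choose_eq_zero_of_lt h]; exact Nat.zero_le _

lemma half_pow_lt {Q D k : ℕ} (hDpos : 0 < D) (hlt : D < Q) (hk : Q < k * D) :
    ((Q : ℝ) - D) ^ k < (Q : ℝ) ^ k / 2 := by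
  have hQr : (0 : ℝ) < Q := by exact_mod_cast hDpos.trans hlt
  have hDr : (0 : ℝ) < D := by exact_mod_cast hDpos
  have hDQr : (D : ℝ) < Q := by exact_mod_cast hlt
  set a : ℝ := (D : ℝ) / Q with ha
  have ha0 : 0 < a := div_pos hDr hQr
  have ha1 : a < 1 := (div_lt_one hQr).2 hDQr
  have s1 : 1 - a ≤ Real.exp (-a) := by
    have := Real.add_one_le_exp (-a); linarith
  have s2 : (1 - a) ^ k ≤ Real.exp (-a) ^ k :=
    pow_le_pow_left₀ (by linarith) s1 k
  have s3 : Real.exp (-a) ^ k = Real.exp (-(a * k)) := by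
    rw [← Real.exp_nat_mul]; ring_nf
  have s4 : 1 < a * k := by
    have hkD : (Q : ℝ) < k * D := by exact_mod_cast hk
    rw [ha]
    rw [div_mul_eq_mul_div, lt_div_iff₀ hQr]
    nlinarith
  have s5 : Real.exp (-(a * k)) < Real.exp (-1) := Real.exp_lt_exp.2 (by linarith)
  have s6 : Real.exp (-1) < 1 / 2 := by
    rw [Real.exp_neg]
    have h2 : (2 : ℝ) < Real.exp 1 := lt_trans (by norm_num) Real.exp_one_gt_d9
    rw [inv_lt_comm₀ (by positivity) (by norm_num)]
    norm_num
    linarith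
  have key : (1 - a) ^ k < 1 / 2 := by
    calc (1 - a) ^ k ≤ Real.exp (-a) ^ k := s2
      _ = Real.exp (-(a * k)) := s3
      _ < Real.exp (-1) := s5
      _ < 1 / 2 := s6
  have hfact : (Q : ℝ) - D = (1 - a) * Q := by
    rw [ha, sub_mul, one_mul, div_mul_cancel₀ _ hQr.ne']
  rw [hfact, mul_pow]
  have hQk : (0 : ℝ) < (Q : ℝ) ^ k := by positivity
  calc (1 - a) ^ k * (Q : ℝ) ^ k < (1 / 2) * (Q : ℝ) ^ k :=
      mul_lt_mul_of_pos_right key hQk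
    _ = (Q : ℝ) ^ k / 2 := by ring


lemma grow_aux {ε : ℝ} (hε : 0 < ε) :
    ∃ N : ℕ, 1 ≤ N ∧ ∀ n : ℕ, N ≤ n → (2 * n : ℝ) ≤ (2 : ℝ) ^ (ε * (n : ℝ)) := by
  set c := ε * Real.log 2 with hc
  have hc0 : 0 < c := mul_pos hε (Real.log_pos one_lt_two)
  refine ⟨⌈8 / c ^ 2⌉₊ + 1, le_add_self, fun n hn => ?_⟩
  have hxn : (8 / c ^ 2 : ℝ) ≤ n := by
    have h1 : (8 / c ^ 2 : ℝ) ≤ ⌈8 / c ^ 2⌉₊ := Nat.le_ceil _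
    have h2 : (⌈8 / c ^ 2⌉₊ : ℝ) ≤ n := by
      exact_mod_cast le_trans (Nat.le_succ _) hn
    linarith
  have h8 : 8 ≤ c ^ 2 * n := by
    rw [div_le_iff₀ (by positivity)] at hxn
    nlinarith
  have hn0 : (0 : ℝ) ≤ n := Nat.cast_nonneg n
  have hrw : (2 : ℝ) ^ (ε * (n : ℝ)) = Real.exp (c * n) := by
    rw [Real.rpow_def_of_pos two_pos, hc]; ring_nf
  rw [hrw]
  have e1 : 1 + c * n / 2 ≤ Real.exp (c * n / 2) := by
    have := Real.add_one_le_exp (c * n / 2); linarith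
  have e2 : Real.exp (c * n) = Real.exp (c * n / 2) ^ 2 := by
    rw [sq, ← Real.exp_add]; ring_nf
  have hcn : 0 ≤ c * n / 2 := by positivity
  have e3 : (1 + c * n / 2) ^ 2 ≤ Real.exp (c * n) := by
    rw [e2]; exact pow_le_pow_left₀ (by linarith) e1 2
  nlinarith [sq_nonneg (c * n / 2), mul_nonneg (mul_nonneg hc0.le hn0) hn0]


/-- For every `ε > 0` there is `N` such that for every `n ≥ N`, every finite set `U`
of size `n`, and all naturals `p, q, r ≥ 1` with `n ≥ p ≥ r` and `n − p + r ≥ q ≥ r`,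
there is a family `𝒞` of `q`-element subsets of `U` with
`|𝒞| ≤ κ(n,p,q,r)·2^(εn)` such that every `p`-element subset `T` of `U` satisfies
`|T ∩ X| ≥ r` for some `X ∈ 𝒞` (an `(n,p,q,r)`-set-intersection-family of size
`κ(n,p,q,r)·2^(o(n))`). -/
theorem stmt19 (ε : ℝ) (hε : 0 < ε) :
    ∃ N : ℕ, ∀ n : ℕ, N ≤ n →
      ∀ (V : Type*) [DecidableEq V] (U : Finset V), U.card = n →
      ∀ p q r : ℕ, 1 ≤ p → 1 ≤ q → 1 ≤ r →
        p ≤ n → r ≤ p → r ≤ q → q ≤ n - p + r →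
      ∃ 𝒞 : Finset (Finset V),
        (∀ X ∈ 𝒞, X ⊆ U ∧ X.card = q) ∧
        (𝒞.card : ℝ) ≤ kappa n p q r * (2 : ℝ) ^ (ε * (n : ℝ)) ∧
        ∀ T ⊆ U, T.card = p → ∃ X ∈ 𝒞, r ≤ (T ∩ X).card := by
  classical
  obtain ⟨N, hN1, hNgrow⟩ := grow_aux hε
  refine ⟨N, fun n hn V _ U hU p q r hp hq hr hpn hrp hrq hqn => ?_⟩
  have hn1 : 1 ≤ n := le_trans hN1 hn
  set Q := (U.powersetCard q).card with hQdef
  have hQ : Q = n.choose q := by rw [hQdef, card_powersetCard, hU]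
  set D := p.choose r * ((n - p).choose (q - r)) with hDdef
  have hDpos : 0 < D :=
    Nat.mul_pos (Nat.choose_pos hrp) (Nat.choose_pos (by omega))
  have hDgood : ∀ T ∈ U.powersetCard p,
      D ≤ ((U.powersetCard q).filter (fun X => r ≤ (T ∩ X).card)).card := by
    intro T hT
    obtain ⟨hTU, hTcard⟩ := mem_powersetCard.1 hT
    have := good_count U T p q r hTU hTcard hrq hrp
    rwa [hU] at this
  have hDQ : D ≤ Q := by
    obtain ⟨T₀, hT₀U, hT₀card⟩ := Finset.exists_subset_card_eq (s := U) (n := p) (hU ▸ hpn)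
    have hT₀ : T₀ ∈ U.powersetCard p := mem_powersetCard.2 ⟨hT₀U, hT₀card⟩
    exact le_trans (hDgood T₀ hT₀) (card_filter_le _ _)
  have hQpos : 0 < Q := lt_of_lt_of_le hDpos hDQ
  set k := Q / D + 1 with hkdef
  have hkD : Q < k * D := by
    have h1 : Q / D * D + Q % D = Q := Nat.div_add_mod' Q D
    have h2 : Q % D < D := Nat.mod_lt Q hDpos
    have h3 : k * D = Q / D * D + D := by rw [hkdef, add_mul, one_mul]
    omega
  have hk1 : 1 ≤ k := le_add_self
  set m := k * n with hmdef
  have hm1 : 1 ≤ m := Nat.one_le_iff_ne_zero.2 (by positivity)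
  -- key counting inequality
  have hmQ : (U.powersetCard p).card * (Q - D) ^ m < Q ^ m := by
    rcases eq_or_lt_of_le hDQ with hEq | hlt
    · have hz : Q - D = 0 := by omega
      rw [hz, zero_pow (by omega), Nat.mul_zero]
      exact pow_pos hQpos m
    · have hP : (U.powersetCard p).card = n.choose p := by
        rw [card_powersetCard, hU]
      have hPle : ((U.powersetCard p).card : ℝ) ≤ 2 ^ n := by
        rw [hP]; exact_mod_cast choose_le_two_pow' n p
      have key := half_pow_lt hDpos hlt hkD
      have hsub : ((Q - D : ℕ) : ℝ) = (Q : ℝ) - D := Nat.cast_sub hDQ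
      have hbase : (0 : ℝ) ≤ (Q : ℝ) - D := by
        have : (D : ℝ) ≤ Q := by exact_mod_cast hDQ
        linarith
      have h2 : (((Q : ℝ) - D) ^ k) ^ n < ((Q : ℝ) ^ k / 2) ^ n := by
        apply pow_lt_pow_left₀ key (by positivity)
        omega
      have h3 : ((Q : ℝ) ^ k / 2) ^ n = (Q : ℝ) ^ m / 2 ^ n := by
        rw [div_pow, ← pow_mul, hmdef]
      have h4 : ((Q : ℝ) - D) ^ m = (((Q : ℝ) - D) ^ k) ^ n := by
        rw [← pow_mul, hmdef]
      have hfin : ((U.powersetCard p).card : ℝ) * ((Q : ℝ) - D) ^ m < (Q : ℝ) ^ m := by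
        have hnn : (0 : ℝ) ≤ ((Q : ℝ) - D) ^ m := by positivity
        calc ((U.powersetCard p).card : ℝ) * ((Q : ℝ) - D) ^ m
            ≤ 2 ^ n * ((Q : ℝ) - D) ^ m := mul_le_mul_of_nonneg_right hPle hnn
          _ < 2 ^ n * ((Q : ℝ) ^ m / 2 ^ n) := by
              rw [h4]
              refine mul_lt_mul_of_pos_left ?_ (by positivity)
              rw [← h3]; exact h2
          _ = (Q : ℝ) ^ m := by field_simp
      have := hfin
      rw [← hsub] at this
      exact_mod_cast this
  obtain ⟨𝒞, h𝒞card, h𝒞mem, h𝒞cover⟩ := cover_exists U p q r m D hDgood hmQ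
  refine ⟨𝒞, h𝒞mem, ?_, ?_⟩
  · -- card bound
    have hκ : kappa n p q r = (Q : ℝ) / D := by
      rw [kappa, hQ, hDdef]; push_cast; ring
    have hDr : (0 : ℝ) < D := by exact_mod_cast hDpos
    have hκ1 : 1 ≤ (Q : ℝ) / D := (one_le_div hDr).2 (by exact_mod_cast hDQ)
    have hkr : (k : ℝ) ≤ (Q : ℝ) / D + 1 := by
      rw [hkdef]; push_cast
      have := Nat.cast_div_le (α := ℝ) (m := Q) (n := D)
      linarith
    have hgrow := hNgrow n hn
    have hQD0 : 0 ≤ (Q : ℝ) / D := by positivity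
    calc (𝒞.card : ℝ) ≤ m := by exact_mod_cast h𝒞card
      _ = (k : ℝ) * n := by rw [hmdef]; push_cast; ring
      _ ≤ ((Q : ℝ) / D + 1) * n := by
          apply mul_le_mul_of_nonneg_right hkr (Nat.cast_nonneg n)
      _ ≤ (2 * ((Q : ℝ) / D)) * n := by
          have hn0 : (0 : ℝ) ≤ n := Nat.cast_nonneg n
          nlinarith
      _ = ((Q : ℝ) / D) * (2 * n) := by ring
      _ ≤ ((Q : ℝ) / D) * (2 : ℝ) ^ (ε * n) := mul_le_mul_of_nonneg_left hgrow hQD0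
      _ = kappa n p q r * (2 : ℝ) ^ (ε * n) := by rw [hκ]
  · intro T hTU hTcard
    exact h𝒞cover T (mem_powersetCard.2 ⟨hTU, hTcard⟩)
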